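/- Let A ∈ F_q^{m×n} and ε ≥ 1, and suppose there exists a nonzero vector u ∈ F_q^m with u ∉ I_FU(A,ε) = {A·y : 0 < wt(y) ≤ 2ε} \ {0}. Let S ∈ F_q^{(m−1)×m} be a matrix whose rows form a basis of the orthogonal complement (with respect to the standard bilinear form) of the span of u. Then S·z ≠ 0 for every z ∈ I_FU(A,ε). -/

import Mathlib

/-- The set `I_FU(A, ε)` of all nonzero vectors of the form `A·y` with
`0 < wt(y) ≤ 2ε`. -/
def IFU {F : Type*} [Field F] [DecidableEq F] {m n : ℕ}
    (A : Matrix (Fin m) (Fin n) F) (ε : ℕ) : Set (Fin m → F) :=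
  {z | z ≠ 0 ∧ ∃ y : Fin n → F,
      0 < hammingNorm y ∧ hammingNorm y ≤ 2 * ε ∧ A.mulVec y = z}

theorem parity_check_of_complement_is_valid {F : Type*} [Field F] [DecidableEq F]
    {m n : ℕ} (A : Matrix (Fin m) (Fin n) F) (ε : ℕ) (hε : 1 ≤ ε)
    (u : Fin m → F) (hu0 : u ≠ 0) (hu : u ∉ IFU A ε)
    (S : Matrix (Fin (m - 1)) (Fin m) F)
    (hSindep : LinearIndependent F (fun i : Fin (m - 1) => S i))
    (hSspan : Submodule.span F (Set.range (fun i : Fin (m - 1) => S i)) =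
      {v : Fin m → F | ∀ c ∈ Submodule.span F {u}, dotProduct v c = 0}) :
    ∀ z ∈ IFU A ε, S.mulVec z ≠ 0 := by
  intro z hz hSz
  obtain ⟨hz0, y, hy1, hy2, hAy⟩ := hz
  -- linear functionals given by dotting with u and z
  let ψ : (Fin m → F) →ₗ[F] F :=
    { toFun := fun v => dotProduct v u
      map_add' := fun a b => add_dotProduct a b u
      map_smul' := fun c a => smul_dotProduct c a u }
  let φ : (Fin m → F) →ₗ[F] F :=
    { toFun := fun v => dotProduct v z
      map_add' := fun a b => add_dotProduct a b z
      map_smul' := fun c a => smul_dotProduct c a z }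
  -- key: ker ψ ≤ ker φ
  have key : ∀ v : Fin m → F, dotProduct v u = 0 → dotProduct v z = 0 := by
    intro v hv
    have hvmem : v ∈ Submodule.span F (Set.range (fun i : Fin (m - 1) => S i)) := by
      rw [← SetLike.mem_coe, hSspan]
      intro c hc
      obtain ⟨a, rfl⟩ := Submodule.mem_span_singleton.1 hc
      rw [dotProduct_smul, hv, smul_zero]
    have : φ v = 0 := by
      refine Submodule.span_induction ?_ ?_ ?_ ?_ hvmem
      · rintro x ⟨i, rfl⟩
        have := congrFun hSz i
        simpa [Matrix.mulVec, φ] using this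
      · simp [φ]
      · intro a b _ _ ha hb; rw [map_add, ha, hb, add_zero]
      · intro c a _ ha; rw [map_smul, ha, smul_zero]
    simpa [φ] using this
  -- therefore φ ∈ span {ψ}
  have hφspan : φ ∈ Submodule.span F (Set.range (fun _ : Unit => ψ)) := by
    apply mem_span_of_iInf_ker_le_ker (𝕜 := F)
    intro v hv
    have hvψ : v ∈ LinearMap.ker ψ := Submodule.mem_iInf _ |>.1 hv ()
    exact key v hvψ
  rw [Set.range_const, Submodule.mem_span_singleton] at hφspan
  obtain ⟨c, hc⟩ := hφspan
  -- z = c • u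
  have hzcu : z = c • u := by
    funext i
    have := congrArg (fun f : (Fin m → F) →ₗ[F] F => f (Pi.single i 1)) hc
    simp only [LinearMap.smul_apply, φ, ψ, LinearMap.coe_mk, AddHom.coe_mk,
      single_dotProduct, one_mul, smul_eq_mul] at this
    simpa [single_dotProduct] using this.symm
  have hcne : c ≠ 0 := by
    rintro rfl
    exact hz0 (by simp [hzcu])
  -- then u ∈ IFU, contradiction
  apply hu
  refine ⟨hu0, c⁻¹ • y, ?_, ?_, ?_⟩
  · rwa [hammingNorm_smul (fun i => smul_right_injective F (inv_ne_zero hcne))]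
  · rwa [hammingNorm_smul (fun i => smul_right_injective F (inv_ne_zero hcne))]
  · rw [Matrix.mulVec_smul, hAy, hzcu, smul_smul, inv_mul_cancel₀ hcne, one_smul]
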